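/- arXiv:1401.1792 — 4 statements merged into one kernel-verified Lean document; each statement's English description precedes it below -/
import Mathlib

section
/- (Lemma B.3.) Let E be a finite-dimensional real normed vector space, Q ⊆ E a closed convex set, ȳ ∈ Q, l : E → ℝ an affine function, ρ ≥ 2, μ > 0, and r̄ > 0. For r ≥ 0 define ψ(r) = max{ l(x) : x ∈ Q, ‖x − ȳ‖ ≤ r } (the maximum exists since the feasible set is compact and nonempty), and define λ*_μ(ȳ) = sup_{y∈Q} { l(y) − (μ/2)‖y − ȳ‖^ρ }. Then λ*_μ(ȳ) ≤ ψ(r̄) + ((ρ−1)/ρ) (2/(μρ))^{1/(ρ−1)} ( (ψ(r̄) − ψ(0))/r̄ )^{ρ/(ρ−1)}. -/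
noncomputable section

open Real

lemma young_aux {s r ρ μ : ℝ} (hs : 0 ≤ s) (hr : 0 ≤ r) (hρ : 2 ≤ ρ) (hμ : 0 < μ) :
    s * r ≤ (ρ-1)/ρ * (2/(μ*ρ)) ^ (1/(ρ-1)) * s ^ (ρ/(ρ-1)) + μ/2 * r ^ ρ := by
  have hρ0 : (0:ℝ) < ρ := by linarith
  have hρ1 : (0:ℝ) < ρ - 1 := by linarith
  have hc : (0:ℝ) < 2/(μ*ρ) := by positivity
  set c := 2/(μ*ρ) with hcdef
  have hpq : (ρ/(ρ-1)).HolderConjugate ρ := by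
    rw [Real.holderConjugate_iff]
    constructor
    · rw [lt_div_iff₀ hρ1]; linarith
    · field_simp; ring
  have key := Real.young_inequality_of_nonneg (a := s * c ^ (1/ρ)) (b := r / c ^ (1/ρ))
    (by positivity) (by positivity) hpq
  have hcne : c ^ (1/ρ) ≠ 0 := by positivity
  have h1 : s * c ^ (1/ρ) * (r / c ^ (1/ρ)) = s * r := by field_simp
  have h2 : (s * c ^ (1/ρ)) ^ (ρ/(ρ-1)) = s ^ (ρ/(ρ-1)) * c ^ (1/(ρ-1)) := by
    rw [Real.mul_rpow hs (by positivity), ← Real.rpow_mul hc.le]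
    congr 2
    field_simp
  have h3 : (r / c ^ (1/ρ)) ^ ρ = r ^ ρ / c := by
    rw [Real.div_rpow hr (by positivity), ← Real.rpow_mul hc.le]
    rw [one_div, inv_mul_cancel₀ hρ0.ne', Real.rpow_one]
  rw [h1, h2, h3] at key
  calc s * r ≤ s ^ (ρ/(ρ-1)) * c ^ (1/(ρ-1)) / (ρ/(ρ-1)) + r ^ ρ / c / ρ := key
    _ = (ρ-1)/ρ * c ^ (1/(ρ-1)) * s ^ (ρ/(ρ-1)) + μ/2 * r ^ ρ := by
        rw [hcdef]; field_simp

/-- Lemma B.3. With `ψ(r) = max{ l(x) : x ∈ Q, ‖x−ȳ‖ ≤ r }`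
and `λ*_μ(ȳ) = sup_{y∈Q}{ l(y) − (μ/2)‖y−ȳ‖^ρ }`, one has
`λ*_μ(ȳ) ≤ ψ(r̄) + ((ρ−1)/ρ)(2/(μρ))^{1/(ρ−1)}((ψ(r̄)−ψ(0))/r̄)^{ρ/(ρ−1)}`. -/
theorem lambda_star_psi_bound
    {E : Type*} [NormedAddCommGroup E] [NormedSpace ℝ E] [FiniteDimensional ℝ E]
    (Q : Set E) (hQc : IsClosed Q) (hQconv : Convex ℝ Q)
    (ybar : E) (hybar : ybar ∈ Q)
    (l : E →ᵃ[ℝ] ℝ) (ρ μ : ℝ) (hρ : 2 ≤ ρ) (hμ : 0 < μ)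
    (rbar : ℝ) (hrbar : 0 < rbar)
    (ψ : ℝ → ℝ)
    (hψ : ∀ r : ℝ, 0 ≤ r →
      IsGreatest ((fun x => l x) '' (Q ∩ Metric.closedBall ybar r)) (ψ r)) :
    sSup ((fun y => l y - (μ / 2) * ‖y - ybar‖ ^ ρ) '' Q) ≤
      ψ rbar + ((ρ - 1) / ρ) * (2 / (μ * ρ)) ^ (1 / (ρ - 1)) *
        ((ψ rbar - ψ 0) / rbar) ^ (ρ / (ρ - 1)) := by
  have hψr := hψ rbar hrbar.le
  have hψ0 := hψ 0 le_rfl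
  -- ψ 0 = l ybar
  have hψ0eq : ψ 0 = l ybar := by
    obtain ⟨x, ⟨hxQ, hxB⟩, hxl⟩ := hψ0.1
    have : x = ybar := by simpa using hxB
    rw [← hxl, this]
  -- ψ 0 ≤ ψ rbar
  have hle : ψ 0 ≤ ψ rbar := by
    rw [hψ0eq]
    exact hψr.2 ⟨ybar, ⟨hybar, by simp [hrbar.le]⟩, rfl⟩
  set s : ℝ := (ψ rbar - ψ 0) / rbar with hsdef
  have hs : 0 ≤ s := div_nonneg (by linarith) hrbar.le
  have hρ0 : (0:ℝ) < ρ := by linarith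
  have hC : 0 ≤ (ρ - 1) / ρ * (2 / (μ * ρ)) ^ (1 / (ρ - 1)) * s ^ (ρ / (ρ - 1)) :=
    mul_nonneg (mul_nonneg (div_nonneg (by linarith) hρ0.le)
      (Real.rpow_nonneg (by positivity) _)) (Real.rpow_nonneg hs _)
  refine csSup_le ⟨_, ⟨ybar, hybar, rfl⟩⟩ ?_
  rintro x ⟨y, hyQ, rfl⟩
  simp only
  set r : ℝ := ‖y - ybar‖ with hrdef
  have hr : 0 ≤ r := norm_nonneg _
  have hrpow : 0 ≤ μ / 2 * r ^ ρ := by positivity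
  rcases le_or_gt r rbar with hcase | hcase
  · -- y is inside the ball of radius rbar
    have hly : l y ≤ ψ rbar := by
      refine hψr.2 ⟨y, ⟨hyQ, ?_⟩, rfl⟩
      rw [Metric.mem_closedBall, dist_eq_norm]
      exact hcase
    linarith
  · -- y outside: use convexity
    have hr0 : 0 < r := lt_trans hrbar hcase
    set t : ℝ := rbar / r with htdef
    have ht0 : 0 < t := by positivity
    have ht1 : t ≤ 1 := by
      rw [htdef, div_le_one hr0]; exact hcase.le
    set z : E := (1 - t) • ybar + t • y with hzdef
    have hzQ : z ∈ Q := hQconv hybar hyQ (by linarith) ht0.le (by ring)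
    have hzB : ‖z - ybar‖ ≤ rbar := by
      have : z - ybar = t • (y - ybar) := by
        rw [hzdef]; module
      rw [this, norm_smul, Real.norm_eq_abs, abs_of_pos ht0, ← hrdef, htdef,
        div_mul_cancel₀ _ hr0.ne']
    have hlz : l z ≤ ψ rbar := by
      refine hψr.2 ⟨z, ⟨hzQ, ?_⟩, rfl⟩
      rwa [Metric.mem_closedBall, dist_eq_norm]
    have hlzeq : (l z : ℝ) = (1 - t) * l ybar + t * l y := by
      rw [hzdef]
      have := AffineMap.apply_lineMap l ybar y t
      rw [AffineMap.lineMap_apply_module, AffineMap.lineMap_apply_module] at this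
      simpa [smul_eq_mul] using this
    -- l y ≤ ψ 0 + s * r
    have hly : l y ≤ ψ 0 + s * r := by
      have h1 : t * (l y - l ybar) ≤ ψ rbar - ψ 0 := by
        rw [hψ0eq]; nlinarith [hlz, hlzeq]
      have h2 : s * rbar = ψ rbar - ψ 0 := by
        rw [hsdef, div_mul_cancel₀ _ hrbar.ne']
      have h3 : t * r = rbar := by
        rw [htdef, div_mul_cancel₀ _ hr0.ne']
      rw [hψ0eq]
      nlinarith [h1]
    have hyoung := young_aux hs hr hρ hμ
    linarith
end
end

section
/- (Lemma B.4, martingale tail bound.) Let (Ω, 𝓕, P) be a probability space with a filtration 𝓕_{−1} ⊆ 𝓕_0 ⊆ ⋯ ⊆ 𝓕_N ⊆ 𝓕. Let ψ_0, …, ψ_N be real random variables with ψ_i 𝓕_i-measurable, and let μ_i ≥ 0 and ν_i > 0 be deterministic reals such that, almost surely, E[ψ_i | 𝓕_{i−1}] ≤ μ_i and E[exp(ψ_i²/ν_i²) | 𝓕_{i−1}] ≤ exp(1) for each i = 0,…,N. Then for every Λ ≥ 0: P[ Σ_{i=0}^{N} ψ_i > Σ_{i=0}^{N} μ_i + Λ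 (Σ_{i=0}^{N} ν_i²)^{1/2} ] ≤ exp(−Λ²/3). -/
noncomputable section

open Real MeasureTheory

section AuxiliaryLemmas

lemma cubic_le_exp_of_nonneg {x : ℝ} (hx : 0 ≤ x) :
    1 + x + x ^ 2 / 2 + x ^ 3 / 6 ≤ exp x := by
  have h := Real.sum_le_exp_of_nonneg hx 4
  simp [Finset.sum_range_succ, Nat.factorial] at h
  linarith

lemma exp_upper_of_le_one {x : ℝ} (h0 : 0 ≤ x) (h1 : x ≤ 1) :
    exp x ≤ 1 + x + x ^ 2 / 2 + x ^ 3 / 6 + x ^ 4 / 24 + x ^ 5 / 100 := by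
  have h := Real.exp_bound' h0 h1 (n := 5) (by norm_num)
  simp [Finset.sum_range_succ, Nat.factorial] at h
  nlinarith [pow_nonneg h0 5]

lemma exp_upper4 {x : ℝ} (h0 : 0 ≤ x) (h1 : x ≤ 1) :
    exp x ≤ 1 + x + x ^ 2 / 2 + x ^ 3 / 6 + x ^ 4 * 5 / 96 := by
  have h := Real.exp_bound' h0 h1 (n := 4) (by norm_num)
  simp [Finset.sum_range_succ, Nat.factorial] at h
  nlinarith [pow_nonneg h0 4]


/-- The key pointwise inequality `exp u ≤ u + exp (9u²/16)`. -/
lemma key_ineq (u : ℝ) : exp u ≤ u + exp (9 / 16 * u ^ 2) := by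
  have hq : 1 + 9 / 16 * u ^ 2 ≤ exp (9 / 16 * u ^ 2) := by
    have := Real.add_one_le_exp (9 / 16 * u ^ 2); linarith
  rcases le_or_gt u 0 with hu | hu
  · -- negative case
    have h1 : 1 + (-u) + (-u) ^ 2 / 2 ≤ exp (-u) := Real.quadratic_le_exp_of_nonneg (by linarith)
    have hD : (0:ℝ) < 1 - u + u ^ 2 / 2 := by nlinarith
    have h2 : exp u ≤ (1 - u + u ^ 2 / 2)⁻¹ := by
      have := inv_anti₀ hD (by nlinarith : 1 - u + u ^ 2 / 2 ≤ exp (-u))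
      rwa [Real.exp_neg, inv_inv] at this
    have h3 : (1 - u + u ^ 2 / 2)⁻¹ ≤ u + 1 + 9 / 16 * u ^ 2 := by
      rw [inv_le_iff_one_le_mul₀ hD]
      nlinarith [sq_nonneg u, sq_nonneg (u*u)]
    linarith
  rcases le_or_gt (16/9 : ℝ) u with hu2 | hu2
  · -- large case
    have : exp u ≤ exp (9 / 16 * u ^ 2) := by
      apply Real.exp_le_exp.2; nlinarith
    linarith
  rcases le_or_gt u 1 with hu1 | hu1
  · -- middle case 0 < u ≤ 1
    have hup := exp_upper_of_le_one hu.le hu1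
    have hlo := cubic_le_exp_of_nonneg (x := 9 / 16 * u ^ 2) (by positivity)
    nlinarith [sq_nonneg (u*(u-2/3)), sq_nonneg (u*u*(u-2/3)), pow_nonneg hu.le 5,
      pow_nonneg hu.le 4, pow_nonneg hu.le 6, sq_nonneg (u-2/3)]
  · -- case 1 < u < 16/9
    have h0 : (0:ℝ) ≤ u - 1 := by linarith
    have h1 : u - 1 ≤ 1 := by linarith
    have hup := exp_upper4 h0 h1
    have he : exp u = exp 1 * exp (u - 1) := by rw [← Real.exp_add]; ring_nf
    have he1 : exp 1 < 2.7182818286 := Real.exp_one_lt_d9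
    have hlo := cubic_le_exp_of_nonneg (x := 9 / 16 * u ^ 2) (by positivity)
    have hexp_pos := Real.exp_pos (u - 1)
    nlinarith [pow_nonneg h0 4, pow_nonneg h0 3, sq_nonneg (u-1), mul_pos (Real.exp_pos 1) hexp_pos,
      sq_nonneg (u*(u-1)), sq_nonneg (u*u-1)]

/-- Tangent line to the concave function `y ↦ y^s` at `y = e`:
for `0 ≤ s ≤ 1`, `exp (s*z) ≤ s * exp (s-1) * exp z + (1-s) * exp s`. -/
lemma tangent_ineq {s : ℝ} (h0 : 0 ≤ s) (h1 : s ≤ 1) (z : ℝ) :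
    exp (s * z) ≤ s * exp (s - 1) * exp z + (1 - s) * exp s := by
  have h := Real.geom_mean_le_arith_mean2_weighted h0 (by linarith : (0:ℝ) ≤ 1 - s)
    (Real.exp_pos z).le (Real.exp_pos 1).le (by ring)
  have e1 : exp z ^ s = exp (z * s) := by
    rw [Real.rpow_def_of_pos (Real.exp_pos z), Real.log_exp]
  have e2 : exp 1 ^ (1 - s) = exp (1 - s) := by
    rw [Real.rpow_def_of_pos (Real.exp_pos 1), Real.log_exp, one_mul]
  rw [e1, e2, ← Real.exp_add] at h
  have hmul := mul_le_mul_of_nonneg_right h (Real.exp_pos (s - 1)).le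
  calc exp (s * z) = exp (z * s + (1 - s)) * exp (s - 1) := by
        rw [← Real.exp_add]; ring_nf
    _ ≤ (s * exp z + (1 - s) * exp 1) * exp (s - 1) := hmul
    _ = s * exp (s - 1) * exp z + (1 - s) * (exp (s - 1) * exp 1) := by ring
    _ = s * exp (s - 1) * exp z + (1 - s) * exp s := by
        rw [← Real.exp_add]; ring_nf

variable {Ω : Type*} [m0 : MeasurableSpace Ω] {P : Measure Ω} [IsProbabilityMeasure P]

lemma abstract_step {m : MeasurableSpace Ω} (hm : m ≤ m0)
    {f X Z : Ω → ℝ} (α β γ cX cZ B : ℝ) (hβ : 0 ≤ β) (hγ : 0 ≤ γ)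
    (hf0 : ∀ ω, 0 ≤ f ω) (hfm : AEStronglyMeasurable[m0] f P)
    (hXint : Integrable X P) (hZint : Integrable Z P)
    (hpt : ∀ ω, f ω ≤ α + β * X ω + γ * Z ω)
    (hcX : ∀ᵐ ω ∂P, (P[X|m]) ω ≤ cX) (hcZ : ∀ᵐ ω ∂P, (P[Z|m]) ω ≤ cZ)
    (hscalar : α + β * cX + γ * cZ ≤ B) :
    Integrable f P ∧ ∀ᵐ ω ∂P, (P[f|m]) ω ≤ B := by
  set X' : Ω → ℝ := fun ω => β * X ω with hX'def
  set Z' : Ω → ℝ := fun ω => γ * Z ω with hZ'def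
  have hX'int : Integrable X' P := hXint.const_mul β
  have hZ'int : Integrable Z' P := hZint.const_mul γ
  set G : Ω → ℝ := (fun _ => α) + X' + Z' with hG
  have hGint : Integrable G P := ((integrable_const α).add hX'int).add hZ'int
  have hfG : ∀ ω, f ω ≤ G ω := fun ω => by
    simpa [hG, Pi.add_apply, add_assoc] using hpt ω
  have hfint : Integrable f P := by
    refine hGint.mono' hfm (Filter.Eventually.of_forall fun ω => ?_)
    rw [Real.norm_eq_abs, abs_of_nonneg (hf0 ω)]; exact hfG ω
  refine ⟨hfint, ?_⟩
  have hmono : (P[f|m]) ≤ᵐ[P] (P[G|m]) :=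
    condExp_mono hfint hGint (Filter.Eventually.of_forall hfG)
  have h1 : (P[G|m]) =ᵐ[P] (P[(fun _ => α) + X'|m]) + (P[Z'|m]) :=
    condExp_add ((integrable_const α).add hX'int) hZ'int m
  have h2 : (P[(fun _ => α) + X'|m]) =ᵐ[P] (P[(fun _ : Ω => α)|m]) + (P[X'|m]) :=
    condExp_add (integrable_const α) hX'int m
  have hconst : (P[(fun _ : Ω => α)|m]) = fun _ => α := condExp_const hm α
  have hX' : (P[X'|m]) =ᵐ[P] fun ω => β * (P[X|m]) ω := by
    exact condExp_smul (μ := P) (m := m) β X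
  have hZ' : (P[Z'|m]) =ᵐ[P] fun ω => γ * (P[Z|m]) ω := by
    exact condExp_smul (μ := P) (m := m) γ Z
  filter_upwards [hmono, h1, h2, hX', hZ', hcX, hcZ] with ω e0 e1 e2 e3 e4 e5 e6
  have eG : (P[G|m]) ω = α + β * (P[X|m]) ω + γ * (P[Z|m]) ω := by
    rw [e1, Pi.add_apply, e2, Pi.add_apply, hconst, e3, e4]
  have hb1 := mul_le_mul_of_nonneg_left e5 hβ
  have hb2 := mul_le_mul_of_nonneg_left e6 hγ
  have : (P[G|m]) ω ≤ α + β * cX + γ * cZ := by rw [eG]; linarith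
  linarith

variable {Ω : Type*} [m0 : MeasurableSpace Ω] {P : Measure Ω} [IsProbabilityMeasure P]

lemma step_bound {m : MeasurableSpace Ω} (hm : m ≤ m0)
    {X : Ω → ℝ} {μ ν l : ℝ} (hμ : 0 ≤ μ) (hν : 0 < ν) (hl : 0 ≤ l)
    (hXm : AEStronglyMeasurable[m0] X P)
    (hXint : Integrable X P)
    (hZint : Integrable (fun ω => exp (X ω ^ 2 / ν ^ 2)) P)
    (hc1 : ∀ᵐ ω ∂P, (P[X|m]) ω ≤ μ)
    (hc2 : ∀ᵐ ω ∂P, (P[(fun ω => exp (X ω ^ 2 / ν ^ 2))|m]) ω ≤ exp 1) :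
    Integrable (fun ω => exp (l * X ω)) P ∧
      ∀ᵐ ω ∂P, (P[(fun ω => exp (l * X ω))|m]) ω ≤ exp (l * μ + 3 / 4 * l ^ 2 * ν ^ 2) := by
  have hν2 : (0:ℝ) < ν ^ 2 := by positivity
  set Z : Ω → ℝ := fun ω => exp (X ω ^ 2 / ν ^ 2) with hZdef
  have hfm : AEStronglyMeasurable[m0] (fun ω => exp (l * X ω)) P :=
    (Real.continuous_exp.comp_aestronglyMeasurable (hXm.const_mul l))
  have hf0 : ∀ ω, 0 ≤ exp (l * X ω) := fun ω => (Real.exp_pos _).le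
  set θ : ℝ := l ^ 2 * ν ^ 2 with hθdef
  have hθ0 : 0 ≤ θ := by positivity
  rcases le_or_gt θ (16 / 9) with hcase | hcase
  · -- small θ
    set s : ℝ := 9 / 16 * θ with hsdef
    have hs0 : 0 ≤ s := by positivity
    have hs1 : s ≤ 1 := by rw [hsdef]; linarith
    have hpt : ∀ ω, exp (l * X ω) ≤
        (1 - s) * exp s + l * X ω + (s * exp (s - 1)) * Z ω := by
      intro ω
      have h1 := key_ineq (l * X ω)
      have he : 9 / 16 * (l * X ω) ^ 2 = s * (X ω ^ 2 / ν ^ 2) := by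
        rw [hsdef, hθdef]; field_simp
      have h2 := tangent_ineq hs0 hs1 (X ω ^ 2 / ν ^ 2)
      rw [he] at h1
      simp only [hZdef]
      linarith
    refine abstract_step (m0 := m0) hm ((1 - s) * exp s) l (s * exp (s - 1)) μ (exp 1) _
      hl (by positivity) hf0 hfm hXint hZint hpt hc1 hc2 ?_
    -- scalar : (1-s) exp s + l μ + s exp(s-1) * exp 1 ≤ exp (lμ + 3/4 θ)
    have he2 : exp (s - 1) * exp 1 = exp s := by rw [← Real.exp_add]; ring_nf
    have hmain : exp s + l * μ ≤ exp (l * μ + 3 / 4 * θ) := by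
      have h3 : exp (l * μ + 3 / 4 * θ) = exp (l * μ) * exp (3 / 4 * θ) := by
        rw [← Real.exp_add]
      have h4 : l * μ + 1 ≤ exp (l * μ) := Real.add_one_le_exp _
      have h5 : exp s ≤ exp (3 / 4 * θ) := Real.exp_le_exp.2 (by rw [hsdef]; linarith)
      have h6 : (1:ℝ) ≤ exp s := by
        rw [← Real.exp_zero]; exact Real.exp_le_exp.2 hs0
      nlinarith [Real.exp_pos (3/4 * θ), mul_nonneg (mul_nonneg hl hμ) (Real.exp_pos (3/4 * θ)).le, mul_nonneg hl hμ]
    calc (1 - s) * exp s + l * μ + (s * exp (s - 1)) * exp 1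
        = exp s + l * μ := by rw [mul_assoc, he2]; ring
      _ ≤ exp (l * μ + 3 / 4 * θ) := hmain
      _ = exp (l * μ + 3 / 4 * l ^ 2 * ν ^ 2) := by rw [hθdef]; ring_nf
  · -- large θ
    have hpt : ∀ ω, exp (l * X ω) ≤
        (exp (3/8 * θ) * (1/3 * exp (2/3 : ℝ))) + 0 * X ω +
          (exp (3/8 * θ) * (2/3 * exp (-(1/3) : ℝ))) * Z ω := by
      intro ω
      have hyoung : l * X ω ≤ 3/8 * θ + 2/3 * (X ω ^ 2 / ν ^ 2) := by
        have hxν : ν * (X ω / ν) = X ω := mul_div_cancel₀ _ hν.ne'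
        have hdp : X ω ^ 2 / ν ^ 2 = (X ω / ν) ^ 2 := by rw [div_pow]
        rw [hθdef, hdp]
        nlinarith [sq_nonneg (3 * l * ν - 4 * (X ω / ν))]
      have h1 : exp (l * X ω) ≤ exp (3/8 * θ) * exp (2/3 * (X ω ^ 2 / ν ^ 2)) := by
        rw [← Real.exp_add]; exact Real.exp_le_exp.2 hyoung
      have h2 := tangent_ineq (by norm_num : (0:ℝ) ≤ 2/3) (by norm_num) (X ω ^ 2 / ν ^ 2)
      have h3 : ((2:ℝ)/3 - 1) = -(1/3 : ℝ) := by norm_num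
      rw [h3] at h2
      have h4 := mul_le_mul_of_nonneg_left h2 (Real.exp_pos (3/8 * θ)).le
      simp only [hZdef]
      nlinarith [h1, h4]
    refine abstract_step (m0 := m0) hm (exp (3/8 * θ) * (1/3 * exp (2/3 : ℝ))) 0
      (exp (3/8 * θ) * (2/3 * exp (-(1/3) : ℝ))) μ (exp 1) _
      le_rfl (by positivity) hf0 hfm hXint hZint hpt hc1 hc2 ?_
    have he2 : exp (-(1/3) : ℝ) * exp 1 = exp (2/3 : ℝ) := by
      rw [← Real.exp_add]; norm_num
    have hfinal : exp (3/8 * θ) * exp (2/3 : ℝ) ≤ exp (l * μ + 3/4 * θ) := by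
      rw [← Real.exp_add]
      refine Real.exp_le_exp.2 ?_
      nlinarith [mul_nonneg hl hμ]
    calc exp (3/8 * θ) * (1/3 * exp (2/3 : ℝ)) + 0 * μ +
          (exp (3/8 * θ) * (2/3 * exp (-(1/3) : ℝ))) * exp 1
        = exp (3/8 * θ) * exp (2/3 : ℝ) := by
          rw [mul_assoc (exp (3/8 * θ)), mul_assoc ((2:ℝ)/3), he2]; ring
      _ ≤ exp (l * μ + 3/4 * θ) := hfinal
      _ = exp (l * μ + 3 / 4 * l ^ 2 * ν ^ 2) := by rw [hθdef]; ring_nf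


lemma prod_bound {m : MeasurableSpace Ω} (hm : m ≤ m0) {X Y : Ω → ℝ}
    (hXm : StronglyMeasurable[m] X) (hXint : Integrable X P) (hX0 : ∀ ω, 0 ≤ X ω)
    (hYint : Integrable Y P) (hY0 : ∀ ω, 0 ≤ Y ω) {C : ℝ} (hC : 0 ≤ C)
    (hcond : ∀ᵐ ω ∂P, (P[Y|m]) ω ≤ C) :
    Integrable (fun ω => X ω * Y ω) P ∧ ∫ ω, X ω * Y ω ∂P ≤ C * ∫ ω, X ω ∂P := by
  set Xk : ℕ → Ω → ℝ := fun k ω => min (X ω) k with hXkdef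
  have hXkm : ∀ k, StronglyMeasurable[m] (Xk k) := fun k => hXm.inf stronglyMeasurable_const
  have hXk0 : ∀ k ω, 0 ≤ Xk k ω := fun k ω => le_min (hX0 ω) (Nat.cast_nonneg k)
  have hXkle : ∀ k ω, Xk k ω ≤ X ω := fun k ω => min_le_left _ _
  have hXkbd : ∀ k, ∀ᵐ ω ∂P, ‖Xk k ω‖ ≤ (k : ℝ) := fun k =>
    Filter.Eventually.of_forall fun ω => by
      rw [Real.norm_eq_abs, abs_of_nonneg (hXk0 k ω)]; exact min_le_right _ _
  have hXkint : ∀ k, Integrable (Xk k) P := fun k =>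
    hXint.mono' ((hXkm k).mono hm).aestronglyMeasurable
      (Filter.Eventually.of_forall fun ω => by
        rw [Real.norm_eq_abs, abs_of_nonneg (hXk0 k ω)]; exact hXkle k ω)
  have hXkYint : ∀ k, Integrable (fun ω => Xk k ω * Y ω) P := fun k =>
    hYint.bdd_mul ((hXkm k).mono hm).aestronglyMeasurable (hXkbd k)
  -- the key bound for truncations
  have hkey : ∀ k, ∫ ω, Xk k ω * Y ω ∂P ≤ C * ∫ ω, X ω ∂P := by
    intro k
    have hpull : (P[(fun ω => Xk k ω * Y ω)|m]) =ᵐ[P] fun ω => Xk k ω * (P[Y|m]) ω := by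
      exact condExp_stronglyMeasurable_mul_of_bound hm (hXkm k) hYint k (hXkbd k)
    have e1 : ∫ ω, Xk k ω * Y ω ∂P = ∫ ω, (P[(fun ω => Xk k ω * Y ω)|m]) ω ∂P :=
      (integral_condExp hm).symm
    have e2 : ∫ ω, (P[(fun ω => Xk k ω * Y ω)|m]) ω ∂P = ∫ ω, Xk k ω * (P[Y|m]) ω ∂P :=
      integral_congr_ae hpull
    have hint1 : Integrable (fun ω => Xk k ω * (P[Y|m]) ω) P :=
      integrable_condExp.bdd_mul ((hXkm k).mono hm).aestronglyMeasurable (hXkbd k)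
    have e3 : ∫ ω, Xk k ω * (P[Y|m]) ω ∂P ≤ ∫ ω, Xk k ω * C ∂P := by
      refine integral_mono_ae hint1 ((hXkint k).mul_const C) ?_
      filter_upwards [hcond] with ω hω
      exact mul_le_mul_of_nonneg_left hω (hXk0 k ω)
    have e4 : ∫ ω, Xk k ω * C ∂P = C * ∫ ω, Xk k ω ∂P := by
      rw [integral_mul_const]; ring
    have e5 : ∫ ω, Xk k ω ∂P ≤ ∫ ω, X ω ∂P :=
      integral_mono (hXkint k) hXint fun ω => hXkle k ω
    calc ∫ ω, Xk k ω * Y ω ∂P = ∫ ω, Xk k ω * (P[Y|m]) ω ∂P := by rw [e1, e2]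
      _ ≤ ∫ ω, Xk k ω * C ∂P := e3
      _ = C * ∫ ω, Xk k ω ∂P := e4
      _ ≤ C * ∫ ω, X ω ∂P := mul_le_mul_of_nonneg_left e5 hC
  -- monotone convergence in the lintegral
  set F : ℕ → Ω → ENNReal := fun k ω => ENNReal.ofReal (Xk k ω * Y ω) with hFdef
  have hFmeas : ∀ k, AEMeasurable (F k) P := fun k =>
    ((hXkYint k).aestronglyMeasurable.aemeasurable).ennreal_ofReal
  have hFmono : ∀ᵐ ω ∂P, Monotone fun k => F k ω := by
    refine Filter.Eventually.of_forall fun ω k j hkj => ?_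
    exact ENNReal.ofReal_le_ofReal
      (mul_le_mul_of_nonneg_right (min_le_min le_rfl (Nat.cast_le.2 hkj)) (hY0 ω))
  have hsup : ∀ ω, (⨆ k, F k ω) = ENNReal.ofReal (X ω * Y ω) := by
    intro ω
    refine le_antisymm (iSup_le fun k => ENNReal.ofReal_le_ofReal
      (mul_le_mul_of_nonneg_right (hXkle k ω) (hY0 ω))) ?_
    refine le_iSup_of_le ⌈X ω⌉₊ (le_of_eq ?_)
    congr 1
    rw [hXkdef]
    simp only []
    rw [min_eq_left (Nat.le_ceil (X ω))]
  have hlin : ∫⁻ ω, ENNReal.ofReal (X ω * Y ω) ∂P ≤ ENNReal.ofReal (C * ∫ ω, X ω ∂P) := by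
    calc ∫⁻ ω, ENNReal.ofReal (X ω * Y ω) ∂P = ∫⁻ ω, ⨆ k, F k ω ∂P := by
          refine lintegral_congr fun ω => (hsup ω).symm
      _ = ⨆ k, ∫⁻ ω, F k ω ∂P := lintegral_iSup' hFmeas hFmono
      _ ≤ ENNReal.ofReal (C * ∫ ω, X ω ∂P) := by
          refine iSup_le fun k => ?_
          have := ofReal_integral_eq_lintegral_ofReal (hXkYint k)
            (Filter.Eventually.of_forall fun ω => mul_nonneg (hXk0 k ω) (hY0 ω))
          rw [hFdef, ← this]
          exact ENNReal.ofReal_le_ofReal (hkey k)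
  have hXYmeas : AEStronglyMeasurable[m0] (fun ω => X ω * Y ω) P :=
    hXint.aestronglyMeasurable.mul hYint.aestronglyMeasurable
  have hXYint : Integrable (fun ω => X ω * Y ω) P := by
    refine ⟨hXYmeas, ?_⟩
    rw [hasFiniteIntegral_iff_norm]
    calc ∫⁻ ω, ENNReal.ofReal ‖X ω * Y ω‖ ∂P
        = ∫⁻ ω, ENNReal.ofReal (X ω * Y ω) ∂P := by
          refine lintegral_congr fun ω => ?_
          rw [Real.norm_eq_abs, abs_of_nonneg (mul_nonneg (hX0 ω) (hY0 ω))]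
      _ ≤ ENNReal.ofReal (C * ∫ ω, X ω ∂P) := hlin
      _ < ⊤ := ENNReal.ofReal_lt_top
  refine ⟨hXYint, ?_⟩
  have e6 : ∫ ω, X ω * Y ω ∂P =
      (∫⁻ ω, ENNReal.ofReal (X ω * Y ω) ∂P).toReal := by
    rw [integral_eq_lintegral_of_nonneg_ae
      (Filter.Eventually.of_forall fun ω => mul_nonneg (hX0 ω) (hY0 ω)) hXYmeas]
  rw [e6]
  calc (∫⁻ ω, ENNReal.ofReal (X ω * Y ω) ∂P).toReal
      ≤ (ENNReal.ofReal (C * ∫ ω, X ω ∂P)).toReal :=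
        ENNReal.toReal_mono ENNReal.ofReal_ne_top hlin
    _ = C * ∫ ω, X ω ∂P := ENNReal.toReal_ofReal
        (mul_nonneg hC (integral_nonneg fun ω => hX0 ω))
variable {Ω : Type*} [m0 : MeasurableSpace Ω] {P : Measure Ω} [IsProbabilityMeasure P]


lemma sm_sum {m : MeasurableSpace Ω} {f : ℕ → Ω → ℝ} (s : Finset ℕ)
    (h : ∀ i ∈ s, StronglyMeasurable[m] (f i)) :
    StronglyMeasurable[m] (fun ω => ∑ i ∈ s, f i ω) := by
  classical
  induction s using Finset.induction with
  | empty => simpa using stronglyMeasurable_const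
  | @insert a s hns ih =>
    have : (fun ω => ∑ i ∈ insert a s, f i ω) =
        fun ω => f a ω + ∑ i ∈ s, f i ω := by
      funext ω; rw [Finset.sum_insert hns]
    rw [this]
    exact (h a (Finset.mem_insert_self a s)).add
      (ih fun i hi => h i (Finset.mem_insert_of_mem hi))

end AuxiliaryLemmas

/-- Lemma B.4, martingale tail bound. The filtration
`𝓕_{−1} ⊆ 𝓕_0 ⊆ ⋯` is encoded by `ℱ : ℕ → MeasurableSpace Ω` with
`ℱ i = 𝓕_{i−1}` (so `ψ i` is `ℱ (i+1)`-measurable, i.e. `𝓕_i`-measurable,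
and conditioning on `𝓕_{i−1}` is conditioning on `ℱ i`). -/
theorem martingale_tail_bound
    {Ω : Type*} [m0 : MeasurableSpace Ω]
    (P : Measure Ω) [IsProbabilityMeasure P]
    (N : ℕ) (ℱ : ℕ → MeasurableSpace Ω)
    (hmono : Monotone ℱ) (hle : ∀ i, ℱ i ≤ m0)
    (ψ : ℕ → Ω → ℝ) (μs ν : ℕ → ℝ)
    (hμs : ∀ i, 0 ≤ μs i) (hν : ∀ i, 0 < ν i)
    (hmeas : ∀ i, StronglyMeasurable[ℱ (i + 1)] (ψ i))
    (hint : ∀ i, Integrable (ψ i) P)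
    (hintexp : ∀ i, Integrable (fun ω => Real.exp ((ψ i ω) ^ 2 / (ν i) ^ 2)) P)
    (hcond : ∀ i, ∀ᵐ ω ∂P, (P[ψ i | ℱ i]) ω ≤ μs i)
    (hcondexp : ∀ i, ∀ᵐ ω ∂P,
      (P[(fun ω => Real.exp ((ψ i ω) ^ 2 / (ν i) ^ 2)) | ℱ i]) ω ≤ Real.exp 1) :
    ∀ Λ : ℝ, 0 ≤ Λ →
      P {ω | ∑ i ∈ Finset.range (N + 1), ψ i ω >
          (∑ i ∈ Finset.range (N + 1), μs i) +
            Λ * Real.sqrt (∑ i ∈ Finset.range (N + 1), (ν i) ^ 2)} ≤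
        ENNReal.ofReal (Real.exp (-Λ ^ 2 / 3)) := by
  intro Λ hΛ
  set T : ℝ := ∑ i ∈ Finset.range (N + 1), (ν i) ^ 2 with hTdef
  have hT : 0 < T :=
    Finset.sum_pos (fun i _ => by have := hν i; positivity) ⟨0, by simp⟩
  set σ : ℝ := Real.sqrt T with hσdef
  have hσ : 0 < σ := Real.sqrt_pos.2 hT
  have hσ2 : σ ^ 2 = T := Real.sq_sqrt hT.le
  set l : ℝ := 2 * Λ / (3 * σ) with hldef
  have hl : 0 ≤ l := by positivity
  set D : ℕ → ℝ := fun i => exp (l * μs i + 3 / 4 * l ^ 2 * (ν i) ^ 2) with hDdef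
  -- per-step facts
  have hstep : ∀ i, Integrable (fun ω => exp (l * ψ i ω)) P ∧
      ∀ᵐ ω ∂P, (P[(fun ω => exp (l * ψ i ω))|ℱ i]) ω ≤ D i := fun i =>
    step_bound (hle i) (hμs i) (hν i) hl
      ((hmeas i).mono (hle (i + 1))).aestronglyMeasurable
      (hint i) (hintexp i) (hcond i) (hcondexp i)
  -- induction on partial sums
  have hind : ∀ n, Integrable (fun ω => exp (l * ∑ i ∈ Finset.range n, ψ i ω)) P ∧
      ∫ ω, exp (l * ∑ i ∈ Finset.range n, ψ i ω) ∂P ≤ ∏ i ∈ Finset.range n, D i := by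
    intro n
    induction n with
    | zero => simp
    | succ n ih =>
      have hfeq : (fun ω => exp (l * ∑ i ∈ Finset.range (n + 1), ψ i ω)) =
          fun ω => exp (l * ∑ i ∈ Finset.range n, ψ i ω) * exp (l * ψ n ω) := by
        funext ω; rw [Finset.sum_range_succ, mul_add, Real.exp_add]
      have hSm : StronglyMeasurable[ℱ n] (fun ω => exp (l * ∑ i ∈ Finset.range n, ψ i ω)) := by
        have hs : StronglyMeasurable[ℱ n] (fun ω => ∑ i ∈ Finset.range n, ψ i ω) :=
          sm_sum _ fun i hi =>
            (hmeas i).mono (hmono (Nat.succ_le_of_lt (Finset.mem_range.1 hi)))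
        exact Real.continuous_exp.comp_stronglyMeasurable (hs.const_mul l)
      have hprod := prod_bound (P := P) (hle n) hSm ih.1 (fun ω => (Real.exp_pos _).le)
        (hstep n).1 (fun ω => (Real.exp_pos _).le) (Real.exp_pos (l * μs n + 3 / 4 * l ^ 2 * (ν n) ^ 2)).le
        (hstep n).2
      constructor
      · rw [hfeq]; exact hprod.1
      · rw [hfeq, Finset.prod_range_succ]
        calc ∫ ω, exp (l * ∑ i ∈ Finset.range n, ψ i ω) * exp (l * ψ n ω) ∂P
            ≤ D n * ∫ ω, exp (l * ∑ i ∈ Finset.range n, ψ i ω) ∂P := hprod.2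
          _ ≤ D n * ∏ i ∈ Finset.range n, D i :=
              mul_le_mul_of_nonneg_left ih.2 (Real.exp_pos _).le
          _ = (∏ i ∈ Finset.range n, D i) * D n := mul_comm _ _
  -- endgame
  set M : ℝ := ∑ i ∈ Finset.range (N + 1), μs i with hMdef
  set a : ℝ := M + Λ * σ with hadef
  have hprodD : ∏ i ∈ Finset.range (N + 1), D i = exp (l * M + 3 / 4 * l ^ 2 * T) := by
    rw [hDdef, ← Real.exp_sum]
    congr 1
    rw [Finset.sum_add_distrib, ← Finset.mul_sum, ← Finset.mul_sum, hMdef, hTdef]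
  obtain ⟨hSint, hSbound⟩ := hind (N + 1)
  have hSbound' : ∫ ω, exp (l * ∑ i ∈ Finset.range (N + 1), ψ i ω) ∂P ≤
      exp (l * M + 3 / 4 * l ^ 2 * T) := hprodD ▸ hSbound
  set g : Ω → ENNReal := fun ω =>
    ENNReal.ofReal (exp (-(l * a)) * exp (l * ∑ i ∈ Finset.range (N + 1), ψ i ω)) with hgdef
  have hgmeas : AEMeasurable g P :=
    ((hSint.const_mul (exp (-(l * a)))).aestronglyMeasurable.aemeasurable).ennreal_ofReal
  have hsub : {ω | ∑ i ∈ Finset.range (N + 1), ψ i ω > M + Λ * σ} ⊆ {ω | 1 ≤ g ω} := by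
    intro ω hω
    simp only [Set.mem_setOf_eq] at hω ⊢
    rw [hgdef]
    rw [ENNReal.one_le_ofReal, ← Real.exp_add]
    rw [← Real.exp_zero]
    apply Real.exp_le_exp.2
    have : l * a ≤ l * ∑ i ∈ Finset.range (N + 1), ψ i ω :=
      mul_le_mul_of_nonneg_left (le_of_lt hω) hl
    linarith
  have hmarkov : P {ω | ∑ i ∈ Finset.range (N + 1), ψ i ω > M + Λ * σ} ≤ ∫⁻ ω, g ω ∂P := by
    calc P {ω | ∑ i ∈ Finset.range (N + 1), ψ i ω > M + Λ * σ}
        ≤ P {ω | 1 ≤ g ω} := measure_mono hsub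
      _ = 1 * P {ω | 1 ≤ g ω} := (one_mul _).symm
      _ ≤ ∫⁻ ω, g ω ∂P := mul_meas_ge_le_lintegral₀ hgmeas 1
  have hlg : ∫⁻ ω, g ω ∂P = ENNReal.ofReal
      (∫ ω, exp (-(l * a)) * exp (l * ∑ i ∈ Finset.range (N + 1), ψ i ω) ∂P) :=
    (ofReal_integral_eq_lintegral_ofReal (hSint.const_mul _)
      (Filter.Eventually.of_forall fun ω =>
        mul_nonneg (Real.exp_pos _).le (Real.exp_pos _).le)).symm
  have hfin : ∫ ω, exp (-(l * a)) * exp (l * ∑ i ∈ Finset.range (N + 1), ψ i ω) ∂P ≤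
      exp (-Λ ^ 2 / 3) := by
    rw [integral_const_mul]
    have h1 : exp (-(l * a)) * ∫ ω, exp (l * ∑ i ∈ Finset.range (N + 1), ψ i ω) ∂P ≤
        exp (-(l * a)) * exp (l * M + 3 / 4 * l ^ 2 * T) :=
      mul_le_mul_of_nonneg_left hSbound' (Real.exp_pos _).le
    have h2 : exp (-(l * a)) * exp (l * M + 3 / 4 * l ^ 2 * T) = exp (-Λ ^ 2 / 3) := by
      rw [← Real.exp_add]
      congr 1
      have hlσ : l * σ = 2 * Λ / 3 := by
        rw [hldef]; field_simp
      have expand : -(l * a) + (l * M + 3 / 4 * l ^ 2 * T) =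
          -Λ * (l * σ) + 3 / 4 * (l * σ) ^ 2 := by
        rw [hadef, ← hσ2]; ring
      rw [expand, hlσ]; ring
    linarith
  calc P {ω | ∑ i ∈ Finset.range (N + 1), ψ i ω > M + Λ * σ}
      ≤ ∫⁻ ω, g ω ∂P := hmarkov
    _ ≤ ENNReal.ofReal (exp (-Λ ^ 2 / 3)) := by
        rw [hlg]; exact ENNReal.ofReal_le_ofReal hfin
end
end

section
/- Let n ≥ 1 and let A be a real symmetric positive semidefinite n×n matrix. Then min{ xᵀAx : x ∈ ℝⁿ, ‖x‖₁ = 1 } ≤ (1/n²) Σ_{i=1}^{n} A_{ii} ≤ (1/n) max_{1≤i,j≤n} |A_{ij}|. Consequently, if the quadratic function f(x) = ½ xᵀAx − bᵀx is strongly convex on ℝⁿ with parameter μ with respect to the ℓ₁-norm (i.e. (x−y)ᵀA(x−y) ≥ μ‖x−y‖₁² for all x, y), then μ ≤ max_{1≤i,j≤n}|A_{ij}| / n. -/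
noncomputable section

open Real Matrix

/-- For a symmetric positive semidefinite matrix `A`, the
minimum of the quadratic form over the unit ℓ₁-sphere is at most
`(1/n²)·trace A ≤ (1/n)·max|A_{ij}|`; consequently any ℓ₁-strong-convexity
parameter `μ` of `f(x) = ½xᵀAx − bᵀx` satisfies `μ ≤ max|A_{ij}|/n`. -/
theorem l1_strong_convexity_parameter_bound
    (n : ℕ) (hn : 1 ≤ n)
    (A : Matrix (Fin n) (Fin n) ℝ) (hsymm : A.IsSymm) (hpsd : A.PosSemidef)
    (Amax : ℝ) (hAmax : IsGreatest {t : ℝ | ∃ i j, t = |A i j|} Amax)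
    (μ : ℝ)
    (hμ : ∀ x y : Fin n → ℝ,
      μ * (∑ i, |x i - y i|) ^ 2 ≤ (x - y) ⬝ᵥ A.mulVec (x - y)) :
    (∃ x : Fin n → ℝ, (∑ i, |x i|) = 1 ∧
        x ⬝ᵥ A.mulVec x ≤ (1 / (n : ℝ) ^ 2) * ∑ i, A i i) ∧
    (1 / (n : ℝ) ^ 2) * (∑ i, A i i) ≤ (1 / (n : ℝ)) * Amax ∧
    μ ≤ Amax / n := by
  have hn0 : (0:ℝ) < n := by exact_mod_cast hn
  set ε : (Fin n → Bool) → Fin n → ℝ := fun s i => if s i then 1 else -1 with hε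
  have heps_abs : ∀ s i, |ε s i| = 1 := by
    intro s i; simp only [hε]; split <;> norm_num
  have heps_sq : ∀ s i, ε s i * ε s i = 1 := by
    intro s i; simp only [hε]; split <;> norm_num
  -- sum over sign vectors of ε s i * ε s j
  have hsum_eps : ∀ i j : Fin n,
      ∑ s : Fin n → Bool, ε s i * ε s j = if i = j then (2:ℝ)^n else 0 := by
    intro i j
    by_cases hij : i = j
    · subst hij
      simp only [heps_sq, if_pos rfl, Finset.sum_const, Finset.card_univ]
      simp [Fintype.card_fun]
    · rw [if_neg hij]
      have hinv : Function.Involutive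
          (fun s : Fin n → Bool => Function.update s j (!(s j))) := by
        intro s; funext k
        by_cases hk : k = j
        · subst hk; simp
        · simp [Function.update_of_ne hk]
      have hneg : ∀ s : Fin n → Bool,
          ε (Function.update s j (!(s j))) i * ε (Function.update s j (!(s j))) j
            = -(ε s i * ε s j) := by
        intro s
        have h1 : (Function.update s j (!(s j))) i = s i := Function.update_of_ne hij _ _
        have h2 : (Function.update s j (!(s j))) j = !(s j) := Function.update_self _ _ _
        simp only [hε, h1, h2]
        cases h : s j <;> simp
      have hS := Equiv.sum_comp hinv.toPerm (fun s => ε s i * ε s j)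
      simp only [Function.Involutive.coe_toPerm] at hS
      have hS2 : ∑ s : Fin n → Bool, -(ε s i * ε s j)
          = ∑ s : Fin n → Bool, ε s i * ε s j := by
        rw [← hS]
        exact Finset.sum_congr rfl fun s _ => (hneg s).symm
      rw [Finset.sum_neg_distrib] at hS2
      linarith
  -- quadratic form expansion
  have hquad : ∀ v : Fin n → ℝ, v ⬝ᵥ A.mulVec v = ∑ i, ∑ j, v i * v j * A i j := by
    intro v
    simp only [dotProduct, mulVec, Finset.mul_sum]
    exact Finset.sum_congr rfl fun i _ => Finset.sum_congr rfl fun j _ => by ring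
  -- key averaging identity
  have key : ∑ s : Fin n → Bool, (ε s) ⬝ᵥ A.mulVec (ε s) = (2:ℝ)^n * ∑ i, A i i := by
    calc ∑ s : Fin n → Bool, (ε s) ⬝ᵥ A.mulVec (ε s)
        = ∑ s : Fin n → Bool, ∑ i, ∑ j, ε s i * ε s j * A i j := by
          exact Finset.sum_congr rfl fun s _ => hquad (ε s)
      _ = ∑ i, ∑ j, ∑ s : Fin n → Bool, ε s i * ε s j * A i j := by
          rw [Finset.sum_comm]
          exact Finset.sum_congr rfl fun i _ => Finset.sum_comm
      _ = ∑ i, ∑ j, (∑ s : Fin n → Bool, ε s i * ε s j) * A i j := by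
          simp [Finset.sum_mul]
      _ = ∑ i, ∑ j, (if i = j then (2:ℝ)^n else 0) * A i j := by
          simp_rw [hsum_eps]
      _ = (2:ℝ)^n * ∑ i, A i i := by
          rw [Finset.mul_sum]
          refine Finset.sum_congr rfl fun i _ => ?_
          rw [Finset.sum_eq_single i]
          · simp
          · intro b _ hb; rw [if_neg (Ne.symm hb), zero_mul]
          · intro h; exact absurd (Finset.mem_univ i) h
  -- there is a sign vector with quadratic form at most the trace
  obtain ⟨s, -, hs⟩ : ∃ s ∈ (Finset.univ : Finset (Fin n → Bool)),
      (ε s) ⬝ᵥ A.mulVec (ε s) ≤ ∑ i, A i i := by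
    apply Finset.exists_le_of_sum_le (Finset.univ_nonempty)
    rw [key, Finset.sum_const, Finset.card_univ]
    simp [Fintype.card_fun, nsmul_eq_mul]
  -- build x
  set x : Fin n → ℝ := fun i => ε s i / n with hx
  have hx1 : (∑ i, |x i|) = 1 := by
    simp only [hx, abs_div, heps_abs, abs_of_pos hn0]
    rw [Finset.sum_const, Finset.card_univ, Fintype.card_fin]
    field_simp
    simp [nsmul_eq_mul, hn0.ne']
  have hxsmul : x = (1/(n:ℝ)) • ε s := by
    funext i; simp [hx, div_eq_inv_mul]
  have hxq : x ⬝ᵥ A.mulVec x ≤ (1 / (n : ℝ) ^ 2) * ∑ i, A i i := by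
    rw [hxsmul, Matrix.mulVec_smul, smul_dotProduct, dotProduct_smul]
    have : (1/(n:ℝ)) • (1/(n:ℝ)) • ((ε s) ⬝ᵥ A.mulVec (ε s))
        = (1/(n:ℝ)^2) * ((ε s) ⬝ᵥ A.mulVec (ε s)) := by
      simp [smul_eq_mul]; ring
    rw [this]
    have h2 : (0:ℝ) < 1/(n:ℝ)^2 := by positivity
    exact mul_le_mul_of_nonneg_left hs (le_of_lt h2)
  refine ⟨⟨x, hx1, hxq⟩, ?_, ?_⟩
  · -- trace bound
    have htr : (∑ i, A i i) ≤ n * Amax := by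
      calc (∑ i, A i i) ≤ ∑ i : Fin n, Amax := by
            refine Finset.sum_le_sum fun i _ => ?_
            exact (le_abs_self _).trans (hAmax.2 ⟨i, i, rfl⟩)
        _ = n * Amax := by
            rw [Finset.sum_const, Finset.card_univ, Fintype.card_fin, nsmul_eq_mul]
    have : (1 / (n : ℝ) ^ 2) * (∑ i, A i i) ≤ (1 / (n : ℝ) ^ 2) * (n * Amax) := by
      apply mul_le_mul_of_nonneg_left htr (by positivity)
    calc (1 / (n : ℝ) ^ 2) * (∑ i, A i i) ≤ (1 / (n : ℝ) ^ 2) * (n * Amax) := this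
      _ = (1 / (n : ℝ)) * Amax := by field_simp
  · -- μ bound
    have h0 := hμ x 0
    simp only [Pi.zero_apply, sub_zero] at h0
    rw [hx1] at h0
    have hA0 : x ⬝ᵥ A.mulVec x ≤ (1/(n:ℝ)) * Amax := by
      refine hxq.trans ?_
      have htr : (∑ i, A i i) ≤ n * Amax := by
        calc (∑ i, A i i) ≤ ∑ i : Fin n, Amax := by
              refine Finset.sum_le_sum fun i _ => ?_
              exact (le_abs_self _).trans (hAmax.2 ⟨i, i, rfl⟩)
          _ = n * Amax := by
              rw [Finset.sum_const, Finset.card_univ, Fintype.card_fin, nsmul_eq_mul]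
      calc (1 / (n : ℝ) ^ 2) * (∑ i, A i i) ≤ (1 / (n : ℝ) ^ 2) * (n * Amax) :=
            mul_le_mul_of_nonneg_left htr (by positivity)
        _ = (1 / (n : ℝ)) * Amax := by field_simp
    calc μ = μ * 1 ^ 2 := by ring
      _ ≤ x ⬝ᵥ A.mulVec x := h0
      _ ≤ (1/(n:ℝ)) * Amax := hA0
      _ = Amax / n := by ring
end
end

section
/- (Entropy-type prox-function of the ℓ₁-ball.) Let n ≥ 1, let B = {x ∈ ℝⁿ : ‖x‖₁ ≤ 1}, let ψ(t) = t ln t for t > 0 and ψ(0) = 0, and define for x ∈ B: d(x) = min{ Σ_{i=1}^{n} [ψ(u^{(i)}) + ψ(v^{(i)})] : Σ_{i=1}^{n} [u^{(i)} + v^{(i)}] = 1, x^{(i)} = u^{(i)} − v^{(i)}, u^{(i)} ≥ 0, v^{(i)} ≥ 0 for all i } + ln(2n). Then: (i) d(0) = 0 and d(x) ≥ 0 for all x ∈ B; (ii) d(x) ≤ ln(2n) for all x ∈ B; (iii) d is strongly convex on B with parameter 1/2 with respect to ‖·‖₁, i.e. d(αx + (1−α)y) ≤ αd(x) + (1−α)d(y)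 − (1/4)α(1−α)‖x − y‖₁² for all x, y ∈ B and α ∈ [0,1]. -/
noncomputable section

open Real

private lemma aux_logD {x m : ℝ} (hx : 0 ≤ x) (hm : 0 < m) :
    (Real.sqrt x - Real.sqrt m)^2 ≤ x * Real.log x - x * Real.log m - x + m := by
  rcases hx.eq_or_lt with h0 | hx'
  · rw [← h0]
    simp [neg_sq, Real.sq_sqrt hm.le]
  · have hsx : 0 < Real.sqrt x := Real.sqrt_pos.2 hx'
    have hsm : 0 < Real.sqrt m := Real.sqrt_pos.2 hm
    have hkey : Real.log (Real.sqrt m / Real.sqrt x) ≤ Real.sqrt m / Real.sqrt x - 1 :=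
      Real.log_le_sub_one_of_pos (by positivity)
    rw [Real.log_div hsm.ne' hsx.ne', Real.log_sqrt hm.le, Real.log_sqrt hx] at hkey
    have h2 : x * (Real.log m / 2 - Real.log x / 2) ≤ x * (Real.sqrt m / Real.sqrt x - 1) :=
      mul_le_mul_of_nonneg_left hkey hx
    have hxx : Real.sqrt x * Real.sqrt x = x := Real.mul_self_sqrt hx
    have hdiv : x * (Real.sqrt m / Real.sqrt x) = Real.sqrt x * Real.sqrt m := by
      rw [mul_div_assoc', div_eq_iff hsx.ne']; linear_combination (-Real.sqrt m) * hxx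
    nlinarith [Real.sq_sqrt hx, Real.sq_sqrt hm.le]

private lemma aux_entropy_ge {p c : ℝ} (hp : 0 ≤ p) (hc : 0 < c) :
    p * Real.log c + p - c ≤ p * Real.log p := by
  nlinarith [aux_logD hp hc, sq_nonneg (Real.sqrt p - Real.sqrt c)]

private lemma aux_scalar {a b α : ℝ} (ha : 0 ≤ a) (hb : 0 ≤ b) (hα : 0 ≤ α) (hα1 : α ≤ 1) :
    α * (1 - α) * (a - b)^2 / (2 * (a + b)) ≤
      α * (a * Real.log a) + (1 - α) * (b * Real.log b)
        - (α * a + (1 - α) * b) * Real.log (α * a + (1 - α) * b) := by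
  rcases eq_or_lt_of_le (by linarith : (0:ℝ) ≤ a + b) with hab | hab
  · have ha0 : a = 0 := by linarith
    have hb0 : b = 0 := by linarith
    simp [ha0, hb0]
  rcases eq_or_lt_of_le hα with hα0 | hα0
  · rw [← hα0]; simp
  rcases eq_or_lt_of_le hα1 with hα1' | hα1'
  · rw [hα1']; simp
  have hm : 0 < α * a + (1 - α) * b := by
    rcases lt_or_ge 0 a with h | h
    · nlinarith [mul_pos hα0 h, mul_nonneg (by linarith : (0:ℝ) ≤ 1-α) hb]
    · have hb' : 0 < b := by nlinarith
      nlinarith [mul_pos (by linarith : (0:ℝ) < 1-α) hb', mul_nonneg hα ha]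
  have hA := aux_logD ha hm
  have hB := aux_logD hb hm
  set sa := Real.sqrt a with hsa
  set sb := Real.sqrt b with hsb
  set sm := Real.sqrt (α * a + (1 - α) * b) with hsm
  have ha' : sa^2 = a := Real.sq_sqrt ha
  have hb' : sb^2 = b := Real.sq_sqrt hb
  have hcomb : α*(sa-sm)^2 + (1-α)*(sb-sm)^2 ≤
      α * (a * Real.log a) + (1 - α) * (b * Real.log b)
        - (α * a + (1 - α) * b) * Real.log (α * a + (1 - α) * b) := by
    nlinarith [mul_le_mul_of_nonneg_left hA hα, mul_le_mul_of_nonneg_left hB (by linarith : (0:ℝ) ≤ 1-α)]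
  rw [div_le_iff₀ (by positivity : (0:ℝ) < 2*(a+b))]
  have key1 : α*(1-α)*(sa-sb)^2 ≤ α*(sa-sm)^2 + (1-α)*(sb-sm)^2 := by
    nlinarith [sq_nonneg (α*(sa-sm) + (1-α)*(sb-sm))]
  have e1 : (a-b)^2 = (sa-sb)^2 * (sa+sb)^2 := by rw [← ha', ← hb']; ring
  have e2 : (sa+sb)^2 ≤ 2*(a+b) := by nlinarith [sq_nonneg (sa-sb)]
  have h3 : 0 ≤ α*(sa-sm)^2 + (1-α)*(sb-sm)^2 :=
    add_nonneg (mul_nonneg hα (sq_nonneg _)) (mul_nonneg (by linarith) (sq_nonneg _))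
  calc α * (1 - α) * (a - b)^2 = (α*(1-α)*(sa-sb)^2) * (sa+sb)^2 := by rw [e1]; ring
    _ ≤ (α*(sa-sm)^2 + (1-α)*(sb-sm)^2) * (sa+sb)^2 :=
        mul_le_mul_of_nonneg_right key1 (sq_nonneg _)
    _ ≤ (α*(sa-sm)^2 + (1-α)*(sb-sm)^2) * (2*(a+b)) :=
        mul_le_mul_of_nonneg_left e2 h3
    _ ≤ _ := mul_le_mul_of_nonneg_right hcomb (by positivity)

private lemma aux_cs {ι : Type*} [Fintype ι] (Δ s : ι → ℝ) (hs : ∀ i, 0 ≤ s i)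
    (h0 : ∀ i, s i = 0 → Δ i = 0) :
    (∑ i, |Δ i|)^2 ≤ (∑ i, Δ i^2 / s i) * ∑ i, s i := by
  have h := Finset.sum_mul_sq_le_sq_mul_sq Finset.univ
    (fun i => |Δ i| / Real.sqrt (s i)) (fun i => Real.sqrt (s i))
  have e1 : ∀ i : ι, |Δ i| / Real.sqrt (s i) * Real.sqrt (s i) = |Δ i| := by
    intro i
    rcases (hs i).eq_or_lt with h' | h'
    · simp [← h', h0 i h'.symm]
    · exact div_mul_cancel₀ _ (Real.sqrt_pos.2 h').ne'
  have e2 : ∀ i : ι, (|Δ i| / Real.sqrt (s i))^2 = Δ i ^2 / s i := by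
    intro i
    rw [div_pow, sq_abs, Real.sq_sqrt (hs i)]
  have e3 : ∀ i : ι, (Real.sqrt (s i))^2 = s i := fun i => Real.sq_sqrt (hs i)
  rw [Finset.sum_congr rfl (fun i _ => e1 i), Finset.sum_congr rfl (fun i _ => e2 i),
    Finset.sum_congr rfl (fun i _ => e3 i)] at h
  exact h

private lemma aux_gibbs {n : ℕ} (hn : 1 ≤ n) (u v : Fin n → ℝ)
    (hu : ∀ i, 0 ≤ u i) (hv : ∀ i, 0 ≤ v i) (hs : (∑ i, (u i + v i)) = 1) :
    -Real.log (2*n) ≤ ∑ i, (u i * Real.log (u i) + v i * Real.log (v i)) := by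
  have hn' : (0:ℝ) < n := by exact_mod_cast hn
  set c : ℝ := 1 / (2*n) with hc_def
  have hc : 0 < c := by positivity
  have hbound : ∑ i, ((u i + v i) * (Real.log c + 1) - 2*c)
      ≤ ∑ i, (u i * Real.log (u i) + v i * Real.log (v i)) := by
    refine Finset.sum_le_sum fun i _ => ?_
    have h1 := aux_entropy_ge (hu i) hc
    have h2 := aux_entropy_ge (hv i) hc
    nlinarith
  have hL : ∑ i, ((u i + v i) * (Real.log c + 1) - 2*c)
      = (Real.log c + 1) - (n:ℝ) * (2*c) := by
    rw [Finset.sum_sub_distrib, ← Finset.sum_mul, hs, Finset.sum_const, Finset.card_univ,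
      Fintype.card_fin, nsmul_eq_mul, one_mul]
  have hnc : (n:ℝ) * (2*c) = 1 := by
    rw [hc_def]; field_simp
  have hlogc : Real.log c = -Real.log (2*n) := by
    rw [hc_def, one_div, Real.log_inv]
  rw [hL, hnc, hlogc] at hbound
  linarith


/-- entropy-type prox-function of the ℓ₁-ball.
`d` is defined on `B = {x : ‖x‖₁ ≤ 1}` via the entropy minimization over
decompositions `x = u − v` (the `IsLeast` hypothesis; note `t·log t = 0` at
`t = 0`). Then `d(0) = 0`, `0 ≤ d ≤ ln(2n)` on `B`, and `d` is strongly convex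
on `B` with parameter `1/2` with respect to `‖·‖₁`. -/
theorem entropy_prox_function_l1_ball
    (n : ℕ) (hn : 1 ≤ n)
    (d : (Fin n → ℝ) → ℝ)
    (hd : ∀ x : Fin n → ℝ, (∑ i, |x i|) ≤ 1 →
      IsLeast {t : ℝ | ∃ u v : Fin n → ℝ,
        (∀ i, 0 ≤ u i) ∧ (∀ i, 0 ≤ v i) ∧
        (∑ i, (u i + v i)) = 1 ∧ (∀ i, x i = u i - v i) ∧
        t = ∑ i, (u i * Real.log (u i) + v i * Real.log (v i))}
        (d x - Real.log (2 * n))) :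
    d 0 = 0 ∧
    (∀ x : Fin n → ℝ, (∑ i, |x i|) ≤ 1 → 0 ≤ d x) ∧
    (∀ x : Fin n → ℝ, (∑ i, |x i|) ≤ 1 → d x ≤ Real.log (2 * n)) ∧
    (∀ x : Fin n → ℝ, (∑ i, |x i|) ≤ 1 → ∀ y : Fin n → ℝ, (∑ i, |y i|) ≤ 1 →
      ∀ α ∈ Set.Icc (0 : ℝ) 1,
        d (α • x + (1 - α) • y) ≤
          α * d x + (1 - α) * d y -
            (1 / 4) * α * (1 - α) * (∑ i, |x i - y i|) ^ 2) := by
  have hn' : (0:ℝ) < n := by exact_mod_cast hn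
  have hlow : ∀ x : Fin n → ℝ, (∑ i, |x i|) ≤ 1 → 0 ≤ d x := by
    intro x hx
    obtain ⟨⟨u, v, hu, hv, hs, -, ht⟩, -⟩ := hd x hx
    have hg := aux_gibbs hn u v hu hv hs
    rw [← ht] at hg
    linarith
  refine ⟨?_, hlow, ?_, ?_⟩
  · -- d 0 = 0
    have h0ball : (∑ i : Fin n, |(0 : Fin n → ℝ) i|) ≤ 1 := by simp
    obtain ⟨-, hlb⟩ := hd 0 h0ball
    have hmem := hlb (a := -Real.log (2*n))
      ⟨fun _ => 1/(2*n), fun _ => 1/(2*n), fun i => by positivity, fun i => by positivity,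
        by
          rw [Finset.sum_const, Finset.card_univ, Fintype.card_fin, nsmul_eq_mul]
          field_simp; ring,
        fun i => by simp,
        by
          rw [Finset.sum_const, Finset.card_univ, Fintype.card_fin, nsmul_eq_mul,
            one_div, Real.log_inv]
          field_simp; ring⟩
    have h2 := hlow 0 h0ball
    linarith
  · -- d x ≤ log (2n)
    intro x hx
    obtain ⟨-, hlb⟩ := hd x hx
    set S := ∑ i, |x i| with hS_def
    have hS0 : 0 ≤ S := Finset.sum_nonneg fun i _ => abs_nonneg _
    set c := (1 - S) / (2*n) with hc_def
    have hc0 : 0 ≤ c := div_nonneg (by linarith) (by positivity)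
    set u : Fin n → ℝ := fun i => max (x i) 0 + c with hu_def
    set v : Fin n → ℝ := fun i => max (-(x i)) 0 + c with hv_def
    have hxi : ∀ i, |x i| ≤ S := fun i =>
      Finset.single_le_sum (f := fun i => |x i|) (fun j _ => abs_nonneg _) (Finset.mem_univ i)
    have hcle : c ≤ (1 - S)/2 := by
      have hn1 : (1:ℝ) ≤ n := by exact_mod_cast hn
      rw [hc_def, div_le_div_iff₀ (by positivity) (by norm_num)]
      nlinarith [mul_nonneg (by linarith : (0:ℝ) ≤ 1-S) (by linarith : (0:ℝ) ≤ 2*(n:ℝ)-2)]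
    have hu0 : ∀ i, 0 ≤ u i := fun i => add_nonneg (le_max_right _ _) hc0
    have hv0 : ∀ i, 0 ≤ v i := fun i => add_nonneg (le_max_right _ _) hc0
    have hu1 : ∀ i, u i ≤ 1 := by
      intro i
      have h1 : max (x i) 0 ≤ |x i| := max_le (le_abs_self _) (abs_nonneg _)
      have := hxi i
      simp only [hu_def]
      linarith
    have hv1 : ∀ i, v i ≤ 1 := by
      intro i
      have h1 : max (-(x i)) 0 ≤ |x i| := max_le (neg_le_abs _) (abs_nonneg _)
      have := hxi i
      simp only [hv_def]
      linarith
    have hsum1 : (∑ i, (u i + v i)) = 1 := by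
      have heq : ∀ i, u i + v i = |x i| + 2*c := by
        intro i
        simp only [hu_def, hv_def]
        rw [show max (x i) 0 + c + (max (-(x i)) 0 + c)
          = (max (x i) 0 + max (-(x i)) 0) + 2*c by ring,
          max_zero_add_max_neg_zero_eq_abs_self]
      rw [Finset.sum_congr rfl fun i _ => heq i, Finset.sum_add_distrib, ← hS_def,
        Finset.sum_const, Finset.card_univ, Fintype.card_fin, nsmul_eq_mul, hc_def]
      field_simp
      ring
    have hmem := hlb (a := ∑ i, (u i * Real.log (u i) + v i * Real.log (v i)))
      ⟨u, v, hu0, hv0, hsum1,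
        fun i => by
          simp only [hu_def, hv_def]
          rw [show max (x i) 0 + c - (max (-(x i)) 0 + c)
            = max (x i) 0 - max (-(x i)) 0 by ring, max_zero_sub_max_neg_zero_eq_self],
        rfl⟩
    have hneg : (∑ i, (u i * Real.log (u i) + v i * Real.log (v i))) ≤ 0 := by
      refine Finset.sum_nonpos fun i _ => ?_
      have l1 := Real.log_nonpos (hu0 i) (hu1 i)
      have l2 := Real.log_nonpos (hv0 i) (hv1 i)
      nlinarith [hu0 i, hv0 i]
    linarith
  · -- strong convexity
    intro x hx y hy α hα
    obtain ⟨hα0, hα1⟩ := hα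
    have h1α : (0:ℝ) ≤ 1 - α := by linarith
    obtain ⟨⟨u₁, v₁, hu₁, hv₁, hs₁, he₁, ht₁⟩, -⟩ := hd x hx
    obtain ⟨⟨u₂, v₂, hu₂, hv₂, hs₂, he₂, ht₂⟩, -⟩ := hd y hy
    have hzi : ∀ i, (α • x + (1 - α) • y) i = α * x i + (1-α) * y i := fun i => by
      simp [Pi.add_apply, Pi.smul_apply, smul_eq_mul]
    have hz : (∑ i, |(α • x + (1 - α) • y) i|) ≤ 1 := by
      calc ∑ i, |(α • x + (1 - α) • y) i| ≤ ∑ i, (α * |x i| + (1-α) * |y i|) := by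
            refine Finset.sum_le_sum fun i _ => ?_
            rw [hzi i]
            calc |α * x i + (1-α) * y i| ≤ |α * x i| + |(1-α) * y i| := abs_add_le _ _
              _ = α * |x i| + (1-α) * |y i| := by
                  rw [abs_mul, abs_mul, abs_of_nonneg hα0, abs_of_nonneg h1α]
        _ = α * (∑ i, |x i|) + (1-α) * (∑ i, |y i|) := by
            rw [Finset.sum_add_distrib, Finset.mul_sum, Finset.mul_sum]
        _ ≤ α * 1 + (1-α) * 1 :=
            add_le_add (mul_le_mul_of_nonneg_left hx hα0) (mul_le_mul_of_nonneg_left hy h1α)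
        _ = 1 := by ring
    obtain ⟨-, hlbz⟩ := hd _ hz
    set u : Fin n → ℝ := fun i => α * u₁ i + (1-α) * u₂ i with hu_def
    set v : Fin n → ℝ := fun i => α * v₁ i + (1-α) * v₂ i with hv_def
    have hdz := hlbz (a := ∑ i, (u i * Real.log (u i) + v i * Real.log (v i)))
      ⟨u, v,
        fun i => add_nonneg (mul_nonneg hα0 (hu₁ i)) (mul_nonneg h1α (hu₂ i)),
        fun i => add_nonneg (mul_nonneg hα0 (hv₁ i)) (mul_nonneg h1α (hv₂ i)),
        by
          have hspl : ∑ i, (u i + v i)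
              = α * (∑ i, (u₁ i + v₁ i)) + (1-α) * (∑ i, (u₂ i + v₂ i)) := by
            rw [Finset.mul_sum, Finset.mul_sum, ← Finset.sum_add_distrib]
            exact Finset.sum_congr rfl fun i _ => by simp only [hu_def, hv_def]; ring
          rw [hspl, hs₁, hs₂]; ring,
        fun i => by rw [hzi i, he₁ i, he₂ i]; simp only [hu_def, hv_def]; ring,
        rfl⟩
    have hstep : ∀ i : Fin n,
        u i * Real.log (u i) + v i * Real.log (v i) ≤
          α * (u₁ i * Real.log (u₁ i)) + (1-α) * (u₂ i * Real.log (u₂ i))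
          + α * (v₁ i * Real.log (v₁ i)) + (1-α) * (v₂ i * Real.log (v₂ i))
          - (α * (1-α) * (u₁ i - u₂ i)^2 / (2 * (u₁ i + u₂ i))
             + α * (1-α) * (v₁ i - v₂ i)^2 / (2 * (v₁ i + v₂ i))) := by
      intro i
      have h1 := aux_scalar (hu₁ i) (hu₂ i) hα0 hα1
      have h2 := aux_scalar (hv₁ i) (hv₂ i) hα0 hα1
      simp only [hu_def, hv_def]
      linarith
    have hsum : ∑ i, (u i * Real.log (u i) + v i * Real.log (v i)) ≤
        α * (∑ i, (u₁ i * Real.log (u₁ i) + v₁ i * Real.log (v₁ i)))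
        + (1-α) * (∑ i, (u₂ i * Real.log (u₂ i) + v₂ i * Real.log (v₂ i)))
        - ∑ i, (α * (1-α) * (u₁ i - u₂ i)^2 / (2 * (u₁ i + u₂ i))
             + α * (1-α) * (v₁ i - v₂ i)^2 / (2 * (v₁ i + v₂ i))) := by
      have hle := Finset.sum_le_sum fun i (_ : i ∈ Finset.univ) => hstep i
      have hsplit : ∑ i, (α * (u₁ i * Real.log (u₁ i)) + (1-α) * (u₂ i * Real.log (u₂ i))
          + α * (v₁ i * Real.log (v₁ i)) + (1-α) * (v₂ i * Real.log (v₂ i))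
          - (α * (1-α) * (u₁ i - u₂ i)^2 / (2 * (u₁ i + u₂ i))
             + α * (1-α) * (v₁ i - v₂ i)^2 / (2 * (v₁ i + v₂ i))))
          = α * (∑ i, (u₁ i * Real.log (u₁ i) + v₁ i * Real.log (v₁ i)))
        + (1-α) * (∑ i, (u₂ i * Real.log (u₂ i) + v₂ i * Real.log (v₂ i)))
        - ∑ i, (α * (1-α) * (u₁ i - u₂ i)^2 / (2 * (u₁ i + u₂ i))
             + α * (1-α) * (v₁ i - v₂ i)^2 / (2 * (v₁ i + v₂ i))) := by
        rw [Finset.mul_sum, Finset.mul_sum, ← Finset.sum_add_distrib, ← Finset.sum_sub_distrib]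
        exact Finset.sum_congr rfl fun i _ => by ring
      rw [hsplit] at hle
      exact hle
    have hQ : (1/4) * α * (1-α) * (∑ i, |x i - y i|)^2 ≤
        ∑ i, (α * (1-α) * (u₁ i - u₂ i)^2 / (2 * (u₁ i + u₂ i))
             + α * (1-α) * (v₁ i - v₂ i)^2 / (2 * (v₁ i + v₂ i))) := by
      set Δ : Fin n ⊕ Fin n → ℝ :=
        Sum.elim (fun i => u₁ i - u₂ i) (fun i => v₁ i - v₂ i) with hΔ_def
      set s : Fin n ⊕ Fin n → ℝ :=
        Sum.elim (fun i => u₁ i + u₂ i) (fun i => v₁ i + v₂ i) with hs_def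
      have hs0 : ∀ j, 0 ≤ s j := by
        rintro (i|i)
        · exact add_nonneg (hu₁ i) (hu₂ i)
        · exact add_nonneg (hv₁ i) (hv₂ i)
      have h00 : ∀ j, s j = 0 → Δ j = 0 := by
        rintro (i|i) h
        · simp only [hs_def, Sum.elim_inl] at h
          simp only [hΔ_def, Sum.elim_inl]
          have := hu₁ i; have := hu₂ i; linarith
        · simp only [hs_def, Sum.elim_inr] at h
          simp only [hΔ_def, Sum.elim_inr]
          have := hv₁ i; have := hv₂ i; linarith
      have hcs := aux_cs Δ s hs0 h00
      have hsum_s : ∑ j, s j = 2 := by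
        rw [Fintype.sum_sum_type]
        simp only [hs_def, Sum.elim_inl, Sum.elim_inr]
        have hre : ∑ i, (u₁ i + u₂ i) + ∑ i, (v₁ i + v₂ i)
            = ∑ i, (u₁ i + v₁ i) + ∑ i, (u₂ i + v₂ i) := by
          rw [← Finset.sum_add_distrib, ← Finset.sum_add_distrib]
          exact Finset.sum_congr rfl fun i _ => by ring
        rw [hre, hs₁, hs₂]; norm_num
      have habs : ∑ i, |x i - y i| ≤ ∑ j, |Δ j| := by
        rw [Fintype.sum_sum_type]
        simp only [hΔ_def, Sum.elim_inl, Sum.elim_inr]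
        rw [← Finset.sum_add_distrib]
        refine Finset.sum_le_sum fun i _ => ?_
        rw [he₁ i, he₂ i]
        calc |u₁ i - v₁ i - (u₂ i - v₂ i)| = |(u₁ i - u₂ i) + (-(v₁ i - v₂ i))| := by
              ring_nf
          _ ≤ |u₁ i - u₂ i| + |(-(v₁ i - v₂ i))| := abs_add_le _ _
          _ = |u₁ i - u₂ i| + |v₁ i - v₂ i| := by rw [abs_neg]
      have hK : (∑ i, |x i - y i|)^2 ≤ (∑ j, Δ j^2 / s j) * 2 := by
        calc (∑ i, |x i - y i|)^2 ≤ (∑ j, |Δ j|)^2 :=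
              pow_le_pow_left₀ (Finset.sum_nonneg fun i _ => abs_nonneg _) habs 2
          _ ≤ (∑ j, Δ j^2 / s j) * ∑ j, s j := hcs
          _ = (∑ j, Δ j^2 / s j) * 2 := by rw [hsum_s]
      have hQeq : ∑ i, (α * (1-α) * (u₁ i - u₂ i)^2 / (2 * (u₁ i + u₂ i))
             + α * (1-α) * (v₁ i - v₂ i)^2 / (2 * (v₁ i + v₂ i)))
          = α * (1-α) / 2 * ∑ j, Δ j^2 / s j := by
        rw [Fintype.sum_sum_type]
        simp only [hΔ_def, hs_def, Sum.elim_inl, Sum.elim_inr]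
        rw [mul_add, Finset.mul_sum, Finset.mul_sum, ← Finset.sum_add_distrib]
        refine Finset.sum_congr rfl fun i _ => ?_
        rw [div_mul_div_comm, div_mul_div_comm]
      rw [hQeq]
      have hαα : (0:ℝ) ≤ α * (1-α) := mul_nonneg hα0 h1α
      nlinarith [mul_le_mul_of_nonneg_left hK hαα]
    rw [← ht₁, ← ht₂] at hsum
    linarith
end
end
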